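/- Let G be a free product of cyclic groups (finite or infinite), and let g be a nontrivial element of the commutator subgroup [G,G] that is not conjugate to its inverse g⁻¹. Then scl_G(g) ≥ 1/12. (This is the single-element case of the paper's proposition that every integral chain which is nontrivial in B₁^H(G) has stable commutator length at least 1/12 in a free product of cyclic groups.) -/

import Mathlib

open scoped ENNReal commutatorElement

open Filter Topology

section Quasi

variable {H : Type*} [Group H]

/-- Homogenization of a quasimorphism (Fekete limit of `φ (x^n) / n`). -/
noncomputable def qmH (φ : H → ℝ) (D : ℝ) (x : H) : ℝ :=
  sInf ((fun n : ℕ => (φ (x ^ n) + D) / n) '' Set.Ici 1)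

variable {φ : H → ℝ} {D : ℝ}

variable (hφ : ∀ x y : H, |φ (x * y) - φ x - φ y| ≤ D)
include hφ

lemma qm_D_nonneg : 0 ≤ D := le_trans (abs_nonneg _) (hφ 1 1)

lemma qm_pow_ge (x : H) : ∀ n : ℕ, ((n : ℝ) + 1) * φ x - n * D ≤ φ (x ^ (n + 1)) := by
  intro n
  induction n with
  | zero => simp
  | succ n ih =>
    have h := abs_le.1 (hφ (x ^ (n + 1)) x)
    rw [← pow_succ] at h
    push_cast
    push_cast at ih
    linarith [h.1]

lemma qm_subadd (x : H) : Subadditive (fun n => φ (x ^ n) + D) := by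
  intro m n
  have h := abs_le.1 (hφ (x ^ m) (x ^ n))
  rw [← pow_add] at h
  dsimp only
  linarith [h.2]

lemma qm_bdd (x : H) : BddBelow (Set.range fun n : ℕ => (φ (x ^ n) + D) / n) := by
  refine ⟨min 0 (φ x - D), ?_⟩
  rintro r ⟨n, rfl⟩
  match n with
  | 0 => simp
  | (n + 1) =>
    have hk : (0 : ℝ) < (n : ℝ) + 1 := by positivity
    refine le_trans (min_le_right _ _) ?_
    dsimp only
    push_cast
    rw [le_div_iff₀ hk]
    have h1 := qm_pow_ge hφ x n
    have h2 := qm_D_nonneg hφ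
    push_cast
    nlinarith

lemma tendsto_qmH (x : H) :
    Tendsto (fun n : ℕ => φ (x ^ n) / n) atTop (𝓝 (qmH φ D x)) := by
  have hs := qm_subadd hφ x
  have ht := hs.tendsto_lim (qm_bdd hφ x)
  have hq : qmH φ D x = hs.lim := by rw [Subadditive.lim]; rfl
  rw [hq]
  have h0 : Tendsto (fun n : ℕ => D / n) atTop (𝓝 0) :=
    tendsto_const_div_atTop_nhds_zero_nat D
  have h := ht.sub h0
  rw [sub_zero] at h
  convert h using 2 with n
  rw [← sub_div]
  ring_nf

lemma qmH_one : qmH φ D (1 : H) = 0 := by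
  refine tendsto_nhds_unique (tendsto_qmH hφ 1) ?_
  have h : (fun n : ℕ => φ ((1 : H) ^ n) / n) = fun n : ℕ => φ 1 / n := by
    funext n; rw [one_pow]
  rw [h]
  exact tendsto_const_div_atTop_nhds_zero_nat _

lemma qmH_pow (x : H) {m : ℕ} (hm : 1 ≤ m) : qmH φ D (x ^ m) = m * qmH φ D x := by
  have hm0 : (m : ℝ) ≠ 0 := by positivity
  have hmul : Tendsto (fun n : ℕ => m * n) atTop atTop :=
    tendsto_atTop_mono (fun n => Nat.le_mul_of_pos_left n (by omega)) tendsto_id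
  have h1 : Tendsto (fun n : ℕ => φ (x ^ (m * n)) / (↑(m * n) : ℝ)) atTop
      (𝓝 (qmH φ D x)) := (tendsto_qmH hφ x).comp hmul
  have h2 := h1.const_mul (m : ℝ)
  refine tendsto_nhds_unique (tendsto_qmH hφ (x ^ m)) ?_
  have heq : (fun n : ℕ => φ ((x ^ m) ^ n) / (n : ℝ))
      = fun n : ℕ => (m : ℝ) * (φ (x ^ (m * n)) / (↑(m * n) : ℝ)) := by
    funext n
    rw [← pow_mul, Nat.cast_mul, mul_div_assoc', mul_div_mul_left _ _ hm0]
  rw [heq]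
  exact h2

lemma qmH_ge (x : H) : φ x - D ≤ qmH φ D x := by
  refine ge_of_tendsto (tendsto_qmH hφ x) ?_
  filter_upwards [eventually_ge_atTop 1] with n hn
  match n, hn with
  | (k + 1), _ =>
    have hk : (0 : ℝ) < (k : ℝ) + 1 := by positivity
    push_cast
    rw [le_div_iff₀ hk]
    have h1 := qm_pow_ge hφ x k
    have h2 := qm_D_nonneg hφ
    push_cast
    nlinarith

lemma qmH_conj (z y : H) : qmH φ D (z * y * z⁻¹) = qmH φ D y := by
  refine tendsto_nhds_unique (tendsto_qmH hφ (z * y * z⁻¹)) ?_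
  set C := 2 * D + |φ z| + |φ z⁻¹| with hC
  have hbd : ∀ n : ℕ, |φ ((z * y * z⁻¹) ^ n) - φ (y ^ n)| ≤ C := by
    intro n
    rw [conj_pow]
    have h1 := abs_le.1 (hφ z (y ^ n * z⁻¹))
    have h2 := abs_le.1 (hφ (y ^ n) z⁻¹)
    rw [← mul_assoc] at h1
    have hz := abs_le.1 (le_refl |φ z|)
    have hz' := abs_le.1 (le_refl |φ z⁻¹|)
    rw [abs_le]
    constructor <;> nlinarith [h1.1, h1.2, h2.1, h2.2, hz.1, hz.2, hz'.1, hz'.2]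
  have hlow : Tendsto (fun n : ℕ => φ (y ^ n) / n - C / n) atTop (𝓝 (qmH φ D y)) := by
    have := (tendsto_qmH hφ y).sub (tendsto_const_div_atTop_nhds_zero_nat C)
    rwa [sub_zero] at this
  have hhigh : Tendsto (fun n : ℕ => φ (y ^ n) / n + C / n) atTop (𝓝 (qmH φ D y)) := by
    have := (tendsto_qmH hφ y).add (tendsto_const_div_atTop_nhds_zero_nat C)
    rwa [add_zero] at this
  refine tendsto_of_tendsto_of_tendsto_of_le_of_le' hlow hhigh ?_ ?_
  · filter_upwards [eventually_ge_atTop 1] with n hn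
    have hn0 : (0 : ℝ) < n := by exact_mod_cast hn
    have h := (abs_le.1 (hbd n)).1
    have e1 : φ (y ^ n) / n - C / n = (φ (y ^ n) - C) / n := by ring
    rw [e1]
    gcongr
    linarith
  · filter_upwards [eventually_ge_atTop 1] with n hn
    have hn0 : (0 : ℝ) < n := by exact_mod_cast hn
    have h := (abs_le.1 (hbd n)).2
    have e1 : φ (y ^ n) / n + C / n = (φ (y ^ n) + C) / n := by ring
    rw [e1]
    gcongr
    linarith

lemma qmH_inv (x : H) : qmH φ D x⁻¹ = -qmH φ D x := by
  refine tendsto_nhds_unique (tendsto_qmH hφ x⁻¹) ?_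
  set C := D + |φ 1| with hC
  have hbd : ∀ n : ℕ, |φ ((x⁻¹) ^ n) + φ (x ^ n)| ≤ C := by
    intro n
    have h := abs_le.1 (hφ (x ^ n) ((x ^ n)⁻¹))
    rw [mul_inv_cancel] at h
    rw [inv_pow]
    have h1 := abs_le.1 (le_refl |φ 1|)
    rw [abs_le]
    constructor <;> nlinarith [h.1, h.2, h1.1, h1.2]
  have hlow : Tendsto (fun n : ℕ => -(φ (x ^ n) / n) - C / n) atTop (𝓝 (-qmH φ D x)) := by
    have := ((tendsto_qmH hφ x).neg).sub (tendsto_const_div_atTop_nhds_zero_nat C)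
    rwa [sub_zero] at this
  have hhigh : Tendsto (fun n : ℕ => -(φ (x ^ n) / n) + C / n) atTop (𝓝 (-qmH φ D x)) := by
    have := ((tendsto_qmH hφ x).neg).add (tendsto_const_div_atTop_nhds_zero_nat C)
    rwa [add_zero] at this
  refine tendsto_of_tendsto_of_tendsto_of_le_of_le' hlow hhigh ?_ ?_
  · filter_upwards [eventually_ge_atTop 1] with n hn
    have hn0 : (0 : ℝ) < n := by exact_mod_cast hn
    have h := (abs_le.1 (hbd n)).1
    have e1 : -(φ (x ^ n) / n) - C / n = (-φ (x ^ n) - C) / n := by ring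
    rw [e1]
    gcongr
    linarith
  · filter_upwards [eventually_ge_atTop 1] with n hn
    have hn0 : (0 : ℝ) < n := by exact_mod_cast hn
    have h := (abs_le.1 (hbd n)).2
    have e1 : -(φ (x ^ n) / n) + C / n = (-φ (x ^ n) + C) / n := by ring
    rw [e1]
    gcongr
    linarith

lemma qmH_mul_le (x y : H) : qmH φ D (x * y) ≤ qmH φ D x + qmH φ D y + 2 * D := by
  have key : ∀ n : ℕ, φ ((x * y) ^ n * (x ^ n)⁻¹) ≤ φ 1 + n * (qmH φ D y + 2 * D) := by
    intro n
    induction n with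
    | zero => simp
    | succ n ih =>
      have hid : (x * y) ^ (n + 1) * (x ^ (n + 1))⁻¹
          = ((x * y) ^ n * (x ^ n)⁻¹) * (x ^ (n + 1) * y * (x ^ (n + 1))⁻¹) := by
        rw [pow_succ (x * y) n, pow_succ x n]
        group
      have h1 := abs_le.1 (hφ ((x * y) ^ n * (x ^ n)⁻¹) (x ^ (n + 1) * y * (x ^ (n + 1))⁻¹))
      have h2 : φ (x ^ (n + 1) * y * (x ^ (n + 1))⁻¹) ≤ qmH φ D y + D := by
        have := qmH_ge hφ (x ^ (n + 1) * y * (x ^ (n + 1))⁻¹)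
        rw [qmH_conj hφ] at this
        linarith
      rw [hid]
      push_cast
      nlinarith [h1.2]
  have hg : Tendsto (fun n : ℕ => (φ 1 + D) / n + (qmH φ D y + 2 * D) + φ (x ^ n) / n)
      atTop (𝓝 (0 + (qmH φ D y + 2 * D) + qmH φ D x)) :=
    ((tendsto_const_div_atTop_nhds_zero_nat (φ 1 + D)).add tendsto_const_nhds).add
      (tendsto_qmH hφ x)
  have hle : (fun n : ℕ => φ ((x * y) ^ n) / n) ≤ᶠ[atTop]
      fun n : ℕ => (φ 1 + D) / n + (qmH φ D y + 2 * D) + φ (x ^ n) / n := by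
    filter_upwards [eventually_ge_atTop 1] with n hn
    have hn0 : (0 : ℝ) < n := by exact_mod_cast hn
    have hsx : ((x * y) ^ n * (x ^ n)⁻¹) * x ^ n = (x * y) ^ n := by group
    have h := (abs_le.1 (hφ ((x * y) ^ n * (x ^ n)⁻¹) (x ^ n))).2
    rw [hsx] at h
    have hb : φ ((x * y) ^ n) ≤ φ 1 + n * (qmH φ D y + 2 * D) + φ (x ^ n) + D := by
      linarith [key n]
    rw [div_le_iff₀ hn0]
    have he : ((φ 1 + D) / n + (qmH φ D y + 2 * D) + φ (x ^ n) / n) * n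
        = (φ 1 + D) + (qmH φ D y + 2 * D) * n + φ (x ^ n) := by
      field_simp
    rw [he]
    linarith
  have := le_of_tendsto_of_tendsto (tendsto_qmH hφ (x * y)) hg hle
  linarith

lemma qmH_commutator_le (a b : H) : qmH φ D ⁅a, b⁆ ≤ 2 * D := by
  have h1 : ⁅a, b⁆ = (a * b * a⁻¹) * b⁻¹ := by
    rw [commutatorElement_def]
  rw [h1]
  have h2 := qmH_mul_le hφ (a * b * a⁻¹) b⁻¹
  rw [qmH_conj hφ, qmH_inv hφ] at h2
  linarith

lemma qmH_list_prod_le (l : List H) (hl : ∀ c ∈ l, qmH φ D c ≤ 2 * D) :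
    qmH φ D l.prod ≤ (2 * l.length) * (2 * D) := by
  induction l with
  | nil => simp [qmH_one hφ]
  | cons c l ih =>
    have h1 := qmH_mul_le hφ c l.prod
    have h2 := hl c List.mem_cons_self
    have h3 := ih (fun d hd => hl d (List.mem_cons_of_mem _ hd))
    have hD := qm_D_nonneg hφ
    rw [List.prod_cons]
    simp only [List.length_cons]
    push_cast
    nlinarith

end Quasi

section Count

open scoped Classical

variable {α : Type*}

/-- number of positions of `l` where a window of length `L` belonging to `S` starts -/
noncomputable def cnt (L : ℕ) (S : Set (List α)) (l : List α) : ℕ :=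
  ((Finset.range l.length).filter fun i => (l.drop i).take L ∈ S).card

lemma mem_cnt_filter {L : ℕ} {S : Set (List α)} {l : List α} {i : ℕ} :
    i ∈ (Finset.range l.length).filter (fun i => (l.drop i).take L ∈ S)
      ↔ i < l.length ∧ (l.drop i).take L ∈ S := by
  simp [Finset.mem_filter, Finset.mem_range]

variable {L : ℕ} {S : Set (List α)}

lemma cnt_win_le (hS : ∀ s ∈ S, s.length = L) (hL : 1 ≤ L) {l : List α} {i : ℕ}
    (hi : (l.drop i).take L ∈ S) : i + L ≤ l.length := by
  have h := hS _ hi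
  rw [List.length_take, List.length_drop] at h
  have h2 : L ≤ l.length - i := by
    rcases le_total L (l.length - i) with hc | hc
    · exact hc
    · rw [min_eq_right hc] at h; omega
  omega

lemma win_append_left {a b : List α} {i : ℕ} (h : i + L ≤ a.length) :
    ((a ++ b).drop i).take L = (a.drop i).take L := by
  rw [List.drop_append_of_le_length (by omega), List.take_append_of_le_length]
  rw [List.length_drop]; omega

lemma win_append_right (a b : List α) (i : ℕ) :
    ((a ++ b).drop (i + a.length)).take L = (b.drop i).take L := by
  rw [add_comm i a.length, ← List.drop_drop, List.drop_left]

lemma cnt_append_ge (hS : ∀ s ∈ S, s.length = L) (hL : 1 ≤ L) (a b : List α) :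
    cnt L S a + cnt L S b ≤ cnt L S (a ++ b) := by
  unfold cnt
  set A := (Finset.range a.length).filter fun i => (a.drop i).take L ∈ S with hA
  set B := (Finset.range b.length).filter fun i => (b.drop i).take L ∈ S with hB
  have hsub : A ∪ B.image (· + a.length) ⊆
      (Finset.range (a ++ b).length).filter fun i => ((a ++ b).drop i).take L ∈ S := by
    intro i hi
    rw [Finset.mem_union] at hi
    rcases hi with hi | hi
    · rw [hA, mem_cnt_filter] at hi
      rw [mem_cnt_filter]
      have hiL := cnt_win_le hS hL hi.2
      rw [List.length_append]
      exact ⟨by omega, by rw [win_append_left hiL]; exact hi.2⟩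
    · rw [Finset.mem_image] at hi
      obtain ⟨j, hj, rfl⟩ := hi
      rw [hB, mem_cnt_filter] at hj
      rw [mem_cnt_filter, List.length_append]
      exact ⟨by omega, by rw [win_append_right]; exact hj.2⟩
  have hcard := Finset.card_le_card hsub
  rw [Finset.card_union_of_disjoint, Finset.card_image_of_injective _ (add_left_injective _)] at hcard
  · exact hcard
  · rw [Finset.disjoint_right]
    intro i hi hi'
    rw [Finset.mem_image] at hi
    obtain ⟨j, hj, rfl⟩ := hi
    rw [hA, mem_cnt_filter] at hi'
    omega

lemma cnt_append_le (hS : ∀ s ∈ S, s.length = L) (hL : 1 ≤ L) (a b : List α) :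
    cnt L S (a ++ b) + 1 ≤ cnt L S a + cnt L S b + L := by
  unfold cnt
  set A := (Finset.range a.length).filter fun i => (a.drop i).take L ∈ S with hA
  set B := (Finset.range b.length).filter fun i => (b.drop i).take L ∈ S with hB
  have hsub : ((Finset.range (a ++ b).length).filter fun i => ((a ++ b).drop i).take L ∈ S)
      ⊆ A ∪ B.image (· + a.length) ∪ Finset.Ico (a.length + 1 - L) a.length := by
    intro i hi
    rw [mem_cnt_filter, List.length_append] at hi
    have hiL : i + L ≤ a.length + b.length := by
      have := cnt_win_le hS hL hi.2
      rw [List.length_append] at this; omega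
    rw [Finset.mem_union, Finset.mem_union]
    by_cases h1 : i + L ≤ a.length
    · left; left
      rw [hA, mem_cnt_filter]
      refine ⟨by omega, ?_⟩
      rw [← win_append_left h1]; exact hi.2
    · by_cases h2 : a.length ≤ i
      · left; right
        rw [Finset.mem_image]
        refine ⟨i - a.length, ?_, by omega⟩
        rw [hB, mem_cnt_filter]
        have hw : ((a ++ b).drop i).take L = (b.drop (i - a.length)).take L := by
          rw [← win_append_right a b (i - a.length), Nat.sub_add_cancel h2]
        refine ⟨by omega, ?_⟩
        rw [← hw]; exact hi.2
      · right
        rw [Finset.mem_Ico]; omega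
  have hcard := Finset.card_le_card hsub
  have h1 := Finset.card_union_le (A ∪ B.image (· + a.length)) (Finset.Ico (a.length + 1 - L) a.length)
  have h2 := Finset.card_union_le A (B.image (· + a.length))
  have h3 := Finset.card_image_le (f := (· + a.length)) (s := B)
  rw [Nat.card_Ico] at h1
  have h4 := Finset.card_union_le A (B.image (· + a.length))
  omega

lemma cnt_cons_le (t : α) (b : List α) : cnt L S (t :: b) ≤ cnt L S b + 1 := by
  unfold cnt
  have hsub : ((Finset.range (t :: b).length).filter fun i => ((t :: b).drop i).take L ∈ S)
      ⊆ insert 0 (((Finset.range b.length).filter fun i => (b.drop i).take L ∈ S).image (· + 1)) := by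
    intro i hi
    rw [mem_cnt_filter] at hi
    rw [Finset.mem_insert]
    match i with
    | 0 => exact Or.inl rfl
    | (j + 1) =>
      right
      rw [Finset.mem_image]
      refine ⟨j, ?_, rfl⟩
      rw [mem_cnt_filter]
      rw [List.length_cons] at hi
      exact ⟨by omega, by rw [← List.drop_succ_cons (a := t) (l := b) (i := j)]; exact hi.2⟩
  have h1 := Finset.card_le_card hsub
  have h2 := Finset.card_insert_le 0
    (((Finset.range b.length).filter fun i => (b.drop i).take L ∈ S).image (· + 1))
  have h3 := Finset.card_image_le (f := (· + 1))
    (s := (Finset.range b.length).filter fun i => (b.drop i).take L ∈ S)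
  omega

lemma cnt_cons_ge (t : α) (b : List α) : cnt L S b ≤ cnt L S (t :: b) := by
  unfold cnt
  have hsub : (((Finset.range b.length).filter fun i => (b.drop i).take L ∈ S).image (· + 1))
      ⊆ (Finset.range (t :: b).length).filter fun i => ((t :: b).drop i).take L ∈ S := by
    intro i hi
    rw [Finset.mem_image] at hi
    obtain ⟨j, hj, rfl⟩ := hi
    rw [mem_cnt_filter] at hj ⊢
    rw [List.length_cons, List.drop_succ_cons]
    exact ⟨by omega, hj.2⟩
  have := Finset.card_le_card hsub
  rwa [Finset.card_image_of_injective _ (add_left_injective _)] at this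

/-- reverse of a list with all entries transformed by `e` -/
def invRev (e : α → α) (l : List α) : List α := (l.map e).reverse

lemma invRev_invol {e : α → α} (he : ∀ x, e (e x) = x) (l : List α) :
    invRev e (invRev e l) = l := by
  have hee : e ∘ e = id := funext he
  simp [invRev, List.map_reverse, List.map_map, hee]

lemma length_invRev (e : α → α) (l : List α) : (invRev e l).length = l.length := by
  simp [invRev]

lemma invRev_append (e : α → α) (a b : List α) :
    invRev e (a ++ b) = invRev e b ++ invRev e a := by
  simp [invRev]

lemma invRev_singleton (e : α → α) (x : α) : invRev e [x] = [e x] := by simp [invRev]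

lemma invRev_cons (e : α → α) (x : α) (l : List α) :
    invRev e (x :: l) = invRev e l ++ [e x] := by simp [invRev]

lemma win_invRev (e : α → α) {m : List α} {i : ℕ} (h : i + L ≤ m.length) :
    ((invRev e m).drop i).take L = invRev e ((m.drop (m.length - L - i)).take L) := by
  unfold invRev
  rw [List.drop_reverse, List.take_reverse, List.length_take, List.length_map,
      min_eq_left (by omega : m.length - i ≤ m.length), List.drop_take,
      List.map_take, List.map_drop]
  have e1 : m.length - i - (m.length - i - L) = L := by omega
  have e2 : m.length - i - L = m.length - L - i := by omega
  rw [e1, e2]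

lemma cnt_invRev {e : α → α} (hS : ∀ s ∈ S, s.length = L)
    (hL : 1 ≤ L) (m : List α) :
    cnt L S (invRev e m) = cnt L {l | invRev e l ∈ S} m := by
  have hS' : ∀ s ∈ {l | invRev e l ∈ S}, s.length = L := by
    intro s hs
    have := hS _ hs
    rwa [length_invRev] at this
  unfold cnt
  refine Finset.card_bij' (fun i _ => m.length - L - i) (fun j _ => m.length - L - j)
    ?_ ?_ ?_ ?_
  · intro i hi
    rw [mem_cnt_filter] at hi ⊢
    obtain ⟨hi1, hi2⟩ := hi
    have hiL : i + L ≤ m.length := by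
      have := cnt_win_le hS hL hi2
      rwa [length_invRev] at this
    refine ⟨by omega, ?_⟩
    show invRev e ((m.drop (m.length - L - i)).take L) ∈ S
    rw [← win_invRev e hiL]
    exact hi2
  · intro j hj
    rw [mem_cnt_filter] at hj ⊢
    obtain ⟨hj1, hj2⟩ := hj
    have hjL : j + L ≤ m.length := cnt_win_le hS' hL hj2
    refine ⟨by rw [length_invRev]; omega, ?_⟩
    have hkey := win_invRev (L := L) e (m := m) (i := m.length - L - j)
      (by omega : m.length - L - j + L ≤ m.length)
    have hjj : m.length - L - (m.length - L - j) = j := by omega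
    rw [hkey, hjj] at *
    exact hj2
  · intro i hi
    rw [mem_cnt_filter] at hi
    have hiL : i + L ≤ m.length := by
      have := cnt_win_le hS hL hi.2
      rwa [length_invRev] at this
    omega
  · intro j hj
    rw [mem_cnt_filter] at hj
    have hjL : j + L ≤ m.length := cnt_win_le hS' hL hj.2
    omega


lemma cnt_mid_ge (hS : ∀ s ∈ S, s.length = L) (hL : 1 ≤ L) (a b : List α) (t : α) :
    cnt L S a + cnt L S b ≤ cnt L S (a ++ t :: b) := by
  have h1 := cnt_cons_ge (S := S) (L := L) t b
  have h2 := cnt_append_ge hS hL a (t :: b)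
  omega

lemma cnt_mid_le (hS : ∀ s ∈ S, s.length = L) (hL : 1 ≤ L) (a b : List α) (t : α) :
    cnt L S (a ++ t :: b) ≤ cnt L S a + cnt L S b + L := by
  have h1 := cnt_cons_le (S := S) (L := L) t b
  have h2 := cnt_append_le hS hL a (t :: b)
  omega

/-- `n`-fold concatenation of a list -/
def wpow (w : List α) (n : ℕ) : List α := (List.replicate n w).flatten

lemma wpow_succ (w : List α) (n : ℕ) : wpow w (n + 1) = w ++ wpow w n := by
  simp [wpow, List.replicate_succ]

lemma length_wpow (w : List α) (n : ℕ) : (wpow w n).length = n * w.length := by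
  induction n with
  | zero => simp [wpow]
  | succ n ih => rw [wpow_succ, List.length_append, ih]; ring

lemma take_wpow (w : List α) {n i : ℕ} (hn : 1 ≤ n) (hi : i ≤ w.length) :
    (wpow w n).take i = w.take i := by
  match n, hn with
  | (n + 1), _ => rw [wpow_succ, List.take_append_of_le_length hi]

lemma win_wpow (w : List α) (hw : 1 ≤ w.length) :
    ∀ n i, i + w.length ≤ n * w.length →
      ((wpow w n).drop i).take w.length = w.rotate (i % w.length) := by
  intro n
  induction n with
  | zero => intro i hi; omega
  | succ n ih =>
    intro i hi
    have hexp : (n + 1) * w.length = n * w.length + w.length := by ring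
    by_cases hcase : i < w.length
    · have htk : (wpow w n).take i = w.take i := by
        rcases Nat.eq_zero_or_pos i with hi0 | hi0
        · rw [hi0]; simp
        · have hn1 : 1 ≤ n := by
            by_contra hc
            have hn0 : n = 0 := by omega
            rw [hn0] at hi
            omega
          exact take_wpow w hn1 (le_of_lt hcase)
      rw [Nat.mod_eq_of_lt hcase, wpow_succ,
        List.rotate_eq_drop_append_take (le_of_lt hcase),
        List.drop_append_of_le_length (le_of_lt hcase),
        List.take_append,
        List.take_of_length_le (by rw [List.length_drop]; omega),
        List.length_drop]
      have e1 : w.length - (w.length - i) = i := by omega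
      rw [e1, htk]
    · have hdrop : (wpow w (n + 1)).drop i = (wpow w n).drop (i - w.length) := by
        rw [wpow_succ, show i = w.length + (i - w.length) by omega,
          ← List.drop_drop, List.drop_left]
        congr 1
        omega
      have hmod : i % w.length = (i - w.length) % w.length := by
        conv_lhs => rw [show i = w.length + (i - w.length) by omega]
        exact Nat.add_mod_left _ _
      rw [hdrop, hmod]
      exact ih (i - w.length) (by omega)

lemma cnt_wpow_ge (w : List α) (hw : 1 ≤ w.length)
    (hrot : ∀ k, k < w.length → w.rotate k ∈ S) {n : ℕ} (hn : 1 ≤ n) (hL : L = w.length) :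
    n * w.length + 1 ≤ cnt L S (wpow w n) + w.length := by
  subst hL
  have hnw : w.length ≤ n * w.length := Nat.le_mul_of_pos_left _ (by omega)
  have hsub : Finset.range (n * w.length - w.length + 1)
      ⊆ (Finset.range (wpow w n).length).filter
        fun i => ((wpow w n).drop i).take w.length ∈ S := by
    intro i hi
    rw [Finset.mem_range] at hi
    rw [mem_cnt_filter, length_wpow]
    have hiw : i + w.length ≤ n * w.length := by omega
    refine ⟨by omega, ?_⟩
    rw [win_wpow w hw n i hiw]
    exact hrot _ (Nat.mod_lt _ (by omega))
  have := Finset.card_le_card hsub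
  rw [Finset.card_range] at this
  unfold cnt
  omega

lemma cnt_wpow_eq_zero (w : List α) (hw : 1 ≤ w.length) (hS : ∀ s ∈ S, s.length = L)
    (hrot : ∀ k, k < w.length → w.rotate k ∉ S) {n : ℕ} (hL : L = w.length) :
    cnt L S (wpow w n) = 0 := by
  subst hL
  unfold cnt
  rw [Finset.card_eq_zero, Finset.filter_eq_empty_iff]
  intro i hi hmem
  have hiw : i + w.length ≤ n * w.length := by
    have := cnt_win_le hS hw hmem
    rwa [length_wpow] at this
  rw [win_wpow w hw n i hiw] at hmem
  exact hrot _ (Nat.mod_lt _ (by omega)) hmem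

end Count

section FP

open Monoid.CoprodI

variable {ι : Type*} [DecidableEq ι] {Gf : ι → Type*} [∀ i, Group (Gf i)]
  [∀ i, DecidableEq (Gf i)]

/-- product of the letters of a word -/
def prodList (l : List (Σ i, Gf i)) : Monoid.CoprodI Gf :=
  (l.map fun p => Monoid.CoprodI.of p.2).prod

/-- reduced word -/
def RedWord (l : List (Σ i, Gf i)) : Prop :=
  (∀ p ∈ l, p.2 ≠ 1) ∧ l.Chain' (fun p q => p.1 ≠ q.1)

/-- inverse of a letter -/
def letterInv : (Σ i, Gf i) → (Σ i, Gf i) := fun p => ⟨p.1, p.2⁻¹⟩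

lemma letterInv_invol : ∀ p : (Σ i, Gf i), letterInv (letterInv p) = p := by
  rintro ⟨i, a⟩; simp [letterInv]; exact inv_inv a

/-- the normal form of an element -/
noncomputable def NF (x : Monoid.CoprodI Gf) : List (Σ i, Gf i) :=
  (Word.equiv x).toList

lemma NF_red (x : Monoid.CoprodI Gf) : RedWord (NF x) :=
  ⟨fun p hp => (Word.equiv x).ne_one p hp, (Word.equiv x).chain_ne⟩

lemma prodList_NF (x : Monoid.CoprodI Gf) : prodList (NF x) = x :=
  Word.equiv.symm_apply_apply x

lemma NF_unique {l : List (Σ i, Gf i)} (h : RedWord l) : NF (prodList l) = l := by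
  let W : Word Gf := ⟨l, fun p hp => h.1 p hp, h.2⟩
  have h1 : prodList l = Word.equiv.symm W := rfl
  rw [h1]
  show (Word.equiv (Word.equiv.symm W)).toList = l
  rw [Equiv.apply_symm_apply]

lemma prodList_append (a b : List (Σ i, Gf i)) :
    prodList (a ++ b) = prodList a * prodList b := by
  unfold prodList
  rw [List.map_append, List.prod_append]

lemma prodList_cons (p : (Σ i, Gf i)) (l : List (Σ i, Gf i)) :
    prodList (p :: l) = Monoid.CoprodI.of p.2 * prodList l := by
  unfold prodList
  rw [List.map_cons, List.prod_cons]

lemma prodList_nil : prodList ([] : List (Σ i, Gf i)) = 1 := rfl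

lemma prodList_invRev (m : List (Σ i, Gf i)) :
    prodList (invRev letterInv m) = (prodList m)⁻¹ := by
  unfold prodList invRev
  have h1 : (List.map (fun p : (Σ i, Gf i) => Monoid.CoprodI.of p.2) ((m.map letterInv).reverse))
      = (List.map ((fun p : (Σ i, Gf i) => Monoid.CoprodI.of p.2) ∘ letterInv) m).reverse := by
    rw [List.map_reverse, List.map_map]
  rw [h1, List.prod_inv_reverse, List.map_map]
  congr 2

/-- multiplication with cancellation: first argument is the first factor reversed -/
def mr : List (Σ i, Gf i) → List (Σ i, Gf i) → List (Σ i, Gf i)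
  | [], v => v
  | p :: ru, [] => (p :: ru).reverse
  | ⟨i, a⟩ :: ru, ⟨j, b⟩ :: v =>
    if h : i = j then
      (if a * cast (congrArg Gf h.symm) b = 1 then mr ru v
       else ru.reverse ++ ⟨i, a * cast (congrArg Gf h.symm) b⟩ :: v)
    else (⟨i, a⟩ :: ru).reverse ++ ⟨j, b⟩ :: v

/-- decomposition of a product of two words -/
lemma mr_dec (ru : List (Σ i, Gf i)) : ∀ v : List (Σ i, Gf i),
    ∃ m p q : List (Σ i, Gf i),
    ru.reverse = p ++ invRev letterInv m ∧ v = m ++ q ∧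
    (mr ru v = p ++ q ∨
      ∃ (j : ι) (a b : Gf j) (p₀ q₀ : List (Σ i, Gf i)),
        p = p₀ ++ [⟨j, a⟩] ∧ q = ⟨j, b⟩ :: q₀ ∧ a * b ≠ 1 ∧
          mr ru v = p₀ ++ ⟨j, a * b⟩ :: q₀) := by
  induction ru with
  | nil =>
    intro v
    exact ⟨[], [], v, by simp [invRev], rfl, Or.inl rfl⟩
  | cons x ru ih =>
    intro v
    match v with
    | [] =>
      refine ⟨[], (x :: ru).reverse, [], by simp [invRev], rfl, Or.inl ?_⟩
      obtain ⟨i, a⟩ := x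
      simp [mr]
    | y :: v' =>
      obtain ⟨i, a⟩ := x
      obtain ⟨j, b⟩ := y
      by_cases h : i = j
      · subst h
        by_cases h2 : a * b = 1
        · obtain ⟨m', p, q, hu, hv, hval⟩ := ih v'
          refine ⟨⟨i, b⟩ :: m', p, q, ?_, by rw [hv]; rfl, ?_⟩
          · rw [List.reverse_cons, hu, invRev_cons, ← List.append_assoc]
            have hab : a = b⁻¹ := eq_inv_of_mul_eq_one_left h2
            simp [letterInv, hab]
          · have hmr : mr (⟨i, a⟩ :: ru) (⟨i, b⟩ :: v') = mr ru v' := by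
              simp [mr, h2]
            rw [hmr]
            exact hval
        · refine ⟨[], ru.reverse ++ [⟨i, a⟩], ⟨i, b⟩ :: v', by simp [invRev], rfl, Or.inr ?_⟩
          refine ⟨i, a, b, ru.reverse, v', rfl, rfl, h2, ?_⟩
          simp [mr, h2]
      · refine ⟨[], (⟨i, a⟩ :: ru).reverse, ⟨j, b⟩ :: v', by simp [invRev], rfl, Or.inl ?_⟩
        simp [mr, h]

lemma prodList_mr (ru v : List (Σ i, Gf i)) :
    prodList (mr ru v) = prodList ru.reverse * prodList v := by
  obtain ⟨m, p, q, hu, hv, hval⟩ := mr_dec ru v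
  rcases hval with hval | ⟨j, a, b, p₀, q₀, hp, hq, hne, hval⟩
  · rw [hval, hu, hv, prodList_append, prodList_append, prodList_append, prodList_invRev]
    group
  · rw [hval, hu, hv, hp, hq]
    simp only [prodList_append, prodList_cons, prodList_nil, prodList_invRev]
    show prodList p₀ * (Monoid.CoprodI.of (a * b) * prodList q₀) = _
    rw [MonoidHom.map_mul]
    show _ = prodList p₀ * (Monoid.CoprodI.of a * 1) * (prodList m)⁻¹
      * (prodList m * (Monoid.CoprodI.of b * prodList q₀))
    group

lemma red_append {a b : List (Σ i, Gf i)} (h : RedWord (a ++ b)) :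
    RedWord a ∧ RedWord b := by
  obtain ⟨h1, h2⟩ := h
  rw [List.Chain', List.isChain_append] at h2
  exact ⟨⟨fun p hp => h1 p (List.mem_append_left _ hp), h2.1⟩,
    ⟨fun p hp => h1 p (List.mem_append_right _ hp), h2.2.1⟩⟩

lemma red_cons {p : (Σ i, Gf i)} {l : List (Σ i, Gf i)} (h : RedWord (p :: l)) :
    RedWord l :=
  ⟨fun q hq => h.1 q (List.mem_cons_of_mem _ hq), h.2.tail⟩

lemma mr_red (ru : List (Σ i, Gf i)) : ∀ v : List (Σ i, Gf i),
    RedWord ru.reverse → RedWord v → RedWord (mr ru v) := by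
  induction ru with
  | nil => intro v _ hv; exact hv
  | cons x ru ih =>
    intro v hu hv
    match v with
    | [] =>
      obtain ⟨i, a⟩ := x
      show RedWord ((⟨i, a⟩ :: ru).reverse)
      exact hu
    | y :: v' =>
      obtain ⟨i, a⟩ := x
      obtain ⟨j, b⟩ := y
      rw [List.reverse_cons] at hu
      by_cases h : i = j
      · subst h
        by_cases h2 : a * b = 1
        · have hmr : mr (⟨i, a⟩ :: ru) (⟨i, b⟩ :: v') = mr ru v' := by
            simp [mr, h2]
          rw [hmr]
          exact ih v' (red_append hu).1 (red_cons hv)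
        · have hmr : mr (⟨i, a⟩ :: ru) (⟨i, b⟩ :: v')
              = ru.reverse ++ ⟨i, a * b⟩ :: v' := by
            simp [mr, h2]
          rw [hmr]
          constructor
          · intro p hp
            rw [List.mem_append, List.mem_cons] at hp
            rcases hp with hp | hp | hp
            · exact hu.1 p (List.mem_append_left _ hp)
            · rw [hp]; exact h2
            · exact hv.1 p (List.mem_cons_of_mem _ hp)
          · rw [List.Chain', List.isChain_append]
            refine ⟨(red_append hu).1.2, ?_, ?_⟩
            · rw [List.isChain_cons]
              constructor
              · intro z hz
                have := hv.2
                rw [List.Chain', List.isChain_cons] at this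
                exact this.1 z hz
              · exact (red_cons hv).2
            · intro s hs t ht
              rw [List.head?_cons, Option.mem_some_iff] at ht
              have hju := hu.2
              rw [List.Chain', List.isChain_append] at hju
              have := hju.2.2 s hs ⟨i, a⟩ (by simp)
              rw [← ht]
              exact this
      · have hmr : mr (⟨i, a⟩ :: ru) (⟨j, b⟩ :: v')
            = (⟨i, a⟩ :: ru).reverse ++ ⟨j, b⟩ :: v' := by
          simp [mr, h]
        rw [hmr, List.reverse_cons]
        constructor
        · intro p hp
          rw [List.mem_append] at hp
          rcases hp with hp | hp
          · exact hu.1 p hp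
          · exact hv.1 p hp
        · rw [List.Chain', List.isChain_append]
          refine ⟨hu.2, hv.2, ?_⟩
          intro s hs t ht
          rw [List.getLast?_concat, Option.mem_some_iff] at hs
          rw [List.head?_cons, Option.mem_some_iff] at ht
          rw [← hs, ← ht]
          exact h

lemma NF_mul (x y : Monoid.CoprodI Gf) : NF (x * y) = mr (NF x).reverse (NF y) := by
  have hr : RedWord (mr (NF x).reverse (NF y)) :=
    mr_red _ _ (by rw [List.reverse_reverse]; exact NF_red x) (NF_red y)
  have hp : prodList (mr (NF x).reverse (NF y)) = x * y := by
    rw [prodList_mr, List.reverse_reverse, prodList_NF, prodList_NF]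
  rw [← hp, NF_unique hr]

end FP

section FP2

open Monoid.CoprodI Filter Topology

variable {ι : Type*} [DecidableEq ι] {Gf : ι → Type*} [∀ i, Group (Gf i)]
  [∀ i, DecidableEq (Gf i)]

lemma phi_swap {L : ℕ} {Sp Sm : Set (List (Σ i, Gf i))}
    (hSp : ∀ s ∈ Sp, s.length = L) (hSm : ∀ s ∈ Sm, s.length = L) (hL : 1 ≤ L)
    (hPM : ∀ l, l ∈ Sm ↔ invRev letterInv l ∈ Sp) :
    (∀ m' : List (Σ i, Gf i), cnt L Sp (invRev letterInv m') = cnt L Sm m')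
    ∧ (∀ m' : List (Σ i, Gf i), cnt L Sm (invRev letterInv m') = cnt L Sp m') := by
  constructor
  · intro m'
    rw [cnt_invRev hSp hL]
    congr 1
    ext l
    exact (hPM l).symm
  · intro m'
    rw [cnt_invRev hSm hL]
    congr 1
    ext l
    show invRev letterInv l ∈ Sm ↔ l ∈ Sp
    rw [hPM, invRev_invol letterInv_invol]

lemma phi_defect {L : ℕ} {Sp Sm : Set (List (Σ i, Gf i))}
    (hSp : ∀ s ∈ Sp, s.length = L) (hSm : ∀ s ∈ Sm, s.length = L) (hL : 1 ≤ L)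
    (hPM : ∀ l, l ∈ Sm ↔ invRev letterInv l ∈ Sp)
    (x y : Monoid.CoprodI Gf) :
    |(((cnt L Sp (NF (x * y)) : ℝ) - cnt L Sm (NF (x * y)))
      - ((cnt L Sp (NF x) : ℝ) - cnt L Sm (NF x)))
      - ((cnt L Sp (NF y) : ℝ) - cnt L Sm (NF y))| ≤ 3 * L := by
  obtain ⟨hswP, hswM⟩ := phi_swap hSp hSm hL hPM
  rw [NF_mul]
  obtain ⟨m, p, q, hu, hv, hval⟩ := mr_dec (NF x).reverse (NF y)
  rw [List.reverse_reverse] at hu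
  rcases hval with hval | ⟨j, a, b, p₀, q₀, hp, hq, hne, hval⟩
  · rw [hval, hu, hv]
    have a1 := cnt_append_ge hSp hL p q
    have a2 := cnt_append_le hSp hL p q
    have a3 := cnt_append_ge hSm hL p q
    have a4 := cnt_append_le hSm hL p q
    have b1 := cnt_append_ge hSp hL p (invRev letterInv m)
    have b2 := cnt_append_le hSp hL p (invRev letterInv m)
    have b3 := cnt_append_ge hSm hL p (invRev letterInv m)
    have b4 := cnt_append_le hSm hL p (invRev letterInv m)
    rw [hswP] at b1 b2
    rw [hswM] at b3 b4
    have c1 := cnt_append_ge hSp hL m q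
    have c2 := cnt_append_le hSp hL m q
    have c3 := cnt_append_ge hSm hL m q
    have c4 := cnt_append_le hSm hL m q
    rw [abs_le]
    have r1 := (Nat.cast_le (α := ℝ)).2 a1
    have r2 := (Nat.cast_le (α := ℝ)).2 a2
    have r3 := (Nat.cast_le (α := ℝ)).2 a3
    have r4 := (Nat.cast_le (α := ℝ)).2 a4
    have r5 := (Nat.cast_le (α := ℝ)).2 b1
    have r6 := (Nat.cast_le (α := ℝ)).2 b2
    have r7 := (Nat.cast_le (α := ℝ)).2 b3
    have r8 := (Nat.cast_le (α := ℝ)).2 b4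
    have r9 := (Nat.cast_le (α := ℝ)).2 c1
    have r10 := (Nat.cast_le (α := ℝ)).2 c2
    have r11 := (Nat.cast_le (α := ℝ)).2 c3
    have r12 := (Nat.cast_le (α := ℝ)).2 c4
    push_cast at r1 r2 r3 r4 r5 r6 r7 r8 r9 r10 r11 r12
    constructor <;> push_cast <;> linarith
  · have hu' : NF x = p₀ ++ (⟨j, a⟩ :: invRev letterInv m) := by
      rw [hu, hp, List.append_assoc, List.singleton_append]
    have hv' : NF y = m ++ (⟨j, b⟩ :: q₀) := by rw [hv, hq]
    rw [hval, hu', hv']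
    have a1 := cnt_mid_ge hSp hL p₀ q₀ ⟨j, a * b⟩
    have a2 := cnt_mid_le hSp hL p₀ q₀ ⟨j, a * b⟩
    have a3 := cnt_mid_ge hSm hL p₀ q₀ ⟨j, a * b⟩
    have a4 := cnt_mid_le hSm hL p₀ q₀ ⟨j, a * b⟩
    have b1 := cnt_mid_ge hSp hL p₀ (invRev letterInv m) ⟨j, a⟩
    have b2 := cnt_mid_le hSp hL p₀ (invRev letterInv m) ⟨j, a⟩
    have b3 := cnt_mid_ge hSm hL p₀ (invRev letterInv m) ⟨j, a⟩
    have b4 := cnt_mid_le hSm hL p₀ (invRev letterInv m) ⟨j, a⟩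
    rw [hswP] at b1 b2
    rw [hswM] at b3 b4
    have c1 := cnt_mid_ge hSp hL m q₀ ⟨j, b⟩
    have c2 := cnt_mid_le hSp hL m q₀ ⟨j, b⟩
    have c3 := cnt_mid_ge hSm hL m q₀ ⟨j, b⟩
    have c4 := cnt_mid_le hSm hL m q₀ ⟨j, b⟩
    rw [abs_le]
    have r1 := (Nat.cast_le (α := ℝ)).2 a1
    have r2 := (Nat.cast_le (α := ℝ)).2 a2
    have r3 := (Nat.cast_le (α := ℝ)).2 a3
    have r4 := (Nat.cast_le (α := ℝ)).2 a4
    have r5 := (Nat.cast_le (α := ℝ)).2 b1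
    have r6 := (Nat.cast_le (α := ℝ)).2 b2
    have r7 := (Nat.cast_le (α := ℝ)).2 b3
    have r8 := (Nat.cast_le (α := ℝ)).2 b4
    have r9 := (Nat.cast_le (α := ℝ)).2 c1
    have r10 := (Nat.cast_le (α := ℝ)).2 c2
    have r11 := (Nat.cast_le (α := ℝ)).2 c3
    have r12 := (Nat.cast_le (α := ℝ)).2 c4
    push_cast at r1 r2 r3 r4 r5 r6 r7 r8 r9 r10 r11 r12
    constructor <;> push_cast <;> linarith

lemma prodList_wpow (w : List (Σ i, Gf i)) (n : ℕ) :
    prodList (wpow w n) = (prodList w) ^ n := by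
  induction n with
  | zero => simp [wpow, pow_zero]; rfl
  | succ n ihn => rw [wpow_succ, prodList_append, ihn, pow_succ']

lemma wpow_red {w : List (Σ i, Gf i)} (hred : RedWord w) (h2 : 2 ≤ w.length)
    (hcyc : ∀ s ∈ w.getLast?, ∀ t ∈ w.head?, s.1 ≠ t.1) (n : ℕ) :
    RedWord (wpow w n) := by
  have hwne : w ≠ [] := by
    intro hc
    rw [hc] at h2
    simp at h2
  induction n with
  | zero =>
    refine ⟨?_, ?_⟩ <;> simp [wpow, List.Chain']
  | succ n ihn =>
    rw [wpow_succ]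
    constructor
    · intro pp hpp
      rw [List.mem_append] at hpp
      rcases hpp with hpp | hpp
      · exact hred.1 pp hpp
      · exact ihn.1 pp hpp
    · rw [List.Chain', List.isChain_append]
      refine ⟨hred.2, ihn.2, ?_⟩
      intro s hs t ht
      match n with
      | 0 => simp [wpow] at ht
      | (k + 1) =>
        rw [wpow_succ, List.head?_append_of_ne_nil w hwne] at ht
        exact hcyc s hs t ht

lemma NF_pow_eq_wpow {w : List (Σ i, Gf i)} (hred : RedWord w) (h2 : 2 ≤ w.length)
    (hcyc : ∀ s ∈ w.getLast?, ∀ t ∈ w.head?, s.1 ≠ t.1) (n : ℕ) :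
    NF ((prodList w) ^ n) = wpow w n := by
  rw [← prodList_wpow, NF_unique (wpow_red hred h2 hcyc n)]

lemma prodList_rotate_conj {w : List (Σ i, Gf i)} {k : ℕ} (hk : k ≤ w.length) :
    prodList (w.rotate k)
      = (prodList (w.take k))⁻¹ * prodList w * prodList (w.take k) := by
  rw [List.rotate_eq_drop_append_take hk, prodList_append]
  have hsplit : prodList w = prodList (w.take k) * prodList (w.drop k) := by
    rw [← prodList_append, List.take_append_drop]
  rw [hsplit]
  group

variable [∀ i, IsCyclic (Gf i)]

lemma of_notin_commutator {i : ι} (a : Gf i) (ha : a ≠ 1) :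
    Monoid.CoprodI.of a ∉ commutator (Monoid.CoprodI Gf) := by
  intro hmem
  letI : CommGroup (Gf i) := IsCyclic.commGroup
  let f : ∀ j, Gf j →* Gf i := fun j =>
    if h : j = i then
      { toFun := fun x => cast (congrArg Gf h) x
        map_one' := by subst h; rfl
        map_mul' := by subst h; intros; rfl }
    else 1
  have h1 : Monoid.CoprodI.lift f (Monoid.CoprodI.of a) = a := by
    rw [Monoid.CoprodI.lift_of]
    show (f i) a = a
    simp only [f]
    rw [dif_pos trivial]
    exact cast_eq (congrArg Gf rfl) a
  have h2 : Monoid.CoprodI.lift f (Monoid.CoprodI.of a) = 1 :=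
    Abelianization.commutator_subset_ker (Monoid.CoprodI.lift f) hmem
  rw [h1] at h2
  exact ha h2

lemma exists_cyc_red : ∀ (N : ℕ) (x : Monoid.CoprodI Gf), (NF x).length ≤ N → x ≠ 1 →
    x ∈ commutator (Monoid.CoprodI Gf) →
    ∃ (z : Monoid.CoprodI Gf) (w : List (Σ i, Gf i)), RedWord w ∧ 2 ≤ w.length ∧
      (∀ s ∈ w.getLast?, ∀ t ∈ w.head?, s.1 ≠ t.1) ∧ x = z * prodList w * z⁻¹ := by
  intro N
  induction N with
  | zero =>
    intro x hlen hx1 _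
    exfalso
    apply hx1
    have hnil : NF x = [] := List.length_eq_zero_iff.1 (by omega)
    rw [← prodList_NF x, hnil]
    rfl
  | succ N ih =>
    intro x hlen hx1 hx
    have hne : NF x ≠ [] := by
      intro hc
      apply hx1
      rw [← prodList_NF x, hc]
      rfl
    have hne0 : (NF x).length ≠ 0 := fun hc => hne (List.length_eq_zero_iff.1 hc)
    by_cases h1 : (NF x).length = 1
    · obtain ⟨pp, hpp⟩ := List.length_eq_one_iff.1 h1
      exfalso
      obtain ⟨i, a⟩ := pp
      have ha : a ≠ 1 := (NF_red x).1 ⟨i, a⟩ (by rw [hpp]; simp)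
      apply of_notin_commutator a ha
      have hofa : Monoid.CoprodI.of a = x := by
        rw [← prodList_NF x, hpp, prodList_cons, prodList_nil, mul_one]
      rw [hofa]
      exact hx
    · have hlen2 : 2 ≤ (NF x).length := by omega
      by_cases hc : ∀ s ∈ (NF x).getLast?, ∀ t ∈ (NF x).head?, s.1 ≠ t.1
      · exact ⟨1, NF x, NF_red x, hlen2, hc,
          by rw [one_mul, inv_one, mul_one, prodList_NF]⟩
      · push_neg at hc
        obtain ⟨s, hs, t, ht, hst⟩ := hc
        obtain ⟨hd, tl, htl⟩ := List.exists_cons_of_ne_nil hne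
        have htlne : tl ≠ [] := by
          intro hcon
          rw [htl, hcon] at hlen2
          simp at hlen2
        rcases List.eq_nil_or_concat tl with hcon | ⟨mid, lst, hmid⟩
        · exact absurd hcon htlne
        have hw : NF x = (hd :: mid) ++ [lst] := by
          rw [htl, hmid]
          simp [List.concat_eq_append]
        have hsl : s = lst := by
          rw [hw, List.getLast?_concat, Option.mem_some_iff] at hs
          exact hs.symm
        have htl' : t = hd := by
          rw [hw, List.cons_append, List.head?_cons, Option.mem_some_iff] at ht
          exact ht.symm
        obtain ⟨i, a₂⟩ := hd
        obtain ⟨i', s₂⟩ := lst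
        subst hsl
        subst htl'
        have hii : i' = i := hst
        subst hii
        have hxeq : x = Monoid.CoprodI.of a₂ * prodList (mid ++ [⟨i', s₂⟩]) := by
          conv_lhs => rw [← prodList_NF x, hw]
          rw [List.cons_append, prodList_cons]
        have hredx := NF_red x
        rw [hw] at hredx
        have hredmid : RedWord mid := red_cons (red_append hredx).1
        have hchain : List.Chain' (fun p q : (Σ i, Gf i) => p.1 ≠ q.1)
            (mid ++ [(⟨i', s₂⟩ : Σ i, Gf i)]) := by
          have hcc := hredx.2
          rw [List.cons_append] at hcc
          exact hcc.tail
        have hjun : ∀ u ∈ mid.getLast?, u.1 ≠ i' := by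
          rw [List.Chain', List.isChain_append] at hchain
          intro u hu
          exact hchain.2.2 u hu ⟨i', s₂⟩ (by simp)
        set x' := (Monoid.CoprodI.of a₂)⁻¹ * x * Monoid.CoprodI.of a₂ with hx'def
        have hx'1 : x' ≠ 1 := by
          intro hcon
          apply hx1
          have hxx : x = Monoid.CoprodI.of a₂ * x' * (Monoid.CoprodI.of a₂)⁻¹ := by
            rw [hx'def]; group
          rw [hxx, hcon, mul_one, mul_inv_cancel]
        have hx'mem : x' ∈ commutator (Monoid.CoprodI Gf) := by
          have hnorm : (commutator (Monoid.CoprodI Gf)).Normal := inferInstance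
          have hcm := hnorm.conj_mem x hx (Monoid.CoprodI.of a₂)⁻¹
          rw [inv_inv] at hcm
          rw [hx'def]
          exact hcm
        have hx'eq : x' = prodList mid * Monoid.CoprodI.of (s₂ * a₂) := by
          rw [hx'def, hxeq, prodList_append, prodList_cons, prodList_nil,
            MonoidHom.map_mul]
          show (Monoid.CoprodI.of a₂)⁻¹ * (Monoid.CoprodI.of a₂
            * (prodList mid * (Monoid.CoprodI.of s₂ * 1))) * Monoid.CoprodI.of a₂
            = prodList mid * (Monoid.CoprodI.of s₂ * Monoid.CoprodI.of a₂)
          group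
        by_cases h2 : s₂ * a₂ = 1
        · have hx'mid : x' = prodList mid := by
            rw [hx'eq, h2, MonoidHom.map_one, mul_one]
          have hNFx' : NF x' = mid := by rw [hx'mid, NF_unique hredmid]
          have hmidlen : (NF x').length ≤ N := by
            rw [hNFx']
            have hlx : (NF x).length = mid.length + 2 := by
              rw [hw]; simp
            omega
          obtain ⟨z', w'', hr'', hl'', hc'', he''⟩ := ih x' hmidlen hx'1 hx'mem
          refine ⟨Monoid.CoprodI.of a₂ * z', w'', hr'', hl'', hc'', ?_⟩
          have hxx : x = Monoid.CoprodI.of a₂ * x' * (Monoid.CoprodI.of a₂)⁻¹ := by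
            rw [hx'def]; group
          rw [hxx, he'']
          group
        · have hx'w : x' = prodList (mid ++ [⟨i', s₂ * a₂⟩]) := by
            rw [hx'eq, prodList_append, prodList_cons, prodList_nil, mul_one]
          have hrednew : RedWord (mid ++ [⟨i', s₂ * a₂⟩]) := by
            constructor
            · intro pp hpp
              rw [List.mem_append, List.mem_singleton] at hpp
              rcases hpp with hpp | hpp
              · exact hredmid.1 pp hpp
              · rw [hpp]; exact h2
            · rw [List.Chain', List.isChain_append]
              refine ⟨hredmid.2, List.isChain_singleton _, ?_⟩
              intro u hu tt htt
              rw [List.head?_cons, Option.mem_some_iff] at htt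
              rw [← htt]
              exact hjun u hu
          have hNFx' : NF x' = mid ++ [⟨i', s₂ * a₂⟩] := by
            rw [hx'w, NF_unique hrednew]
          have hmidlen : (NF x').length ≤ N := by
            rw [hNFx']
            have hlx : (NF x).length = mid.length + 2 := by
              rw [hw]; simp
            simp only [List.length_append, List.length_singleton]
            omega
          obtain ⟨z', w'', hr'', hl'', hc'', he''⟩ := ih x' hmidlen hx'1 hx'mem
          refine ⟨Monoid.CoprodI.of a₂ * z', w'', hr'', hl'', hc'', ?_⟩
          have hxx : x = Monoid.CoprodI.of a₂ * x' * (Monoid.CoprodI.of a₂)⁻¹ := by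
            rw [hx'def]; group
          rw [hxx, he'']
          group

end FP2

section SCL

variable {G : Type*} [Group G]

/-- `g` is a product of `k` commutators. -/
def IsProdOfCommutators (g : G) (k : ℕ) : Prop :=
  ∃ a b : Fin k → G, g = (List.ofFn fun i => ⁅a i, b i⁆).prod

/-- The commutator length of `g`: the least number of commutators whose product is `g`. -/
noncomputable def commutatorLength (g : G) : ℕ :=
  sInf {k | IsProdOfCommutators g k}

/-- The stable commutator length of `g`, with values in `[0,∞]` (by Fekete's lemma the
limit `lim_n cl(gⁿ)/n` equals the infimum below). -/
noncomputable def scl (g : G) : ℝ≥0∞ :=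
  ⨅ (n : ℕ+) (_ : ∃ k, IsProdOfCommutators (g ^ (n : ℕ)) k),
    (commutatorLength (g ^ (n : ℕ)) : ℝ≥0∞) / ((n : ℕ) : ℝ≥0∞)

end SCL

/-- **Gap of `1/12` in free products of cyclic groups** (single-element case of the
proposition "gap on chains of free products of cyclic groups").  Let `G = ∗_i G_i` be a
free product of cyclic groups and let `g` be a nontrivial element of the commutator
subgroup of `G` that is not conjugate to its inverse.  Then `scl_G(g) ≥ 1/12`. -/
theorem scl_ge_one_twelfth_free_product_of_cyclic {ι : Type*} (Gf : ι → Type*)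
    [∀ i, Group (Gf i)] [∀ i, IsCyclic (Gf i)]
    (g : Monoid.CoprodI Gf) (hg1 : g ≠ 1) (hg : g ∈ commutator (Monoid.CoprodI Gf))
    (hconj : ¬ ∃ x : Monoid.CoprodI Gf, x * g * x⁻¹ = g⁻¹) :
    (1 / 12 : ℝ≥0∞) ≤ scl g := by
  letI : DecidableEq ι := Classical.decEq ι
  letI : ∀ i, DecidableEq (Gf i) := fun i => Classical.decEq _
  obtain ⟨z, w, hred, hlen2, hcyc, hxz⟩ :=
    exists_cyc_red (NF g).length g le_rfl hg1 hg
  have hL1 : 1 ≤ w.length := by omega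
  set L := w.length with hLdef
  set y := prodList w with hydef
  set Sp : Set (List (Σ i, Gf i)) := {l | ∃ k, k < L ∧ l = w.rotate k} with hSpdef
  set Sm : Set (List (Σ i, Gf i)) := {l | invRev letterInv l ∈ Sp} with hSmdef
  have hSp : ∀ s ∈ Sp, s.length = L := by
    rintro s ⟨k, hk, rfl⟩
    rw [List.length_rotate]
  have hPM : ∀ l, l ∈ Sm ↔ invRev letterInv l ∈ Sp := fun l => Iff.rfl
  have hSm : ∀ s ∈ Sm, s.length = L := by
    intro s hsm
    have h := hSp _ ((hPM s).1 hsm)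
    rwa [length_invRev] at h
  set φ : Monoid.CoprodI Gf → ℝ :=
    fun x => (cnt L Sp (NF x) : ℝ) - cnt L Sm (NF x) with hφdef
  set D : ℝ := 3 * L with hDdef
  have hdef : ∀ a b : Monoid.CoprodI Gf, |φ (a * b) - φ a - φ b| ≤ D :=
    fun a b => phi_defect hSp hSm hL1 hPM a b
  have hrotconj : ∀ k, k ≤ L → ∃ c : Monoid.CoprodI Gf,
      prodList (w.rotate k) = c⁻¹ * y * c := fun k hk =>
    ⟨prodList (w.take k), prodList_rotate_conj hk⟩
  have hdisj : ∀ k, k < L → w.rotate k ∉ Sm := by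
    intro k hk hmem
    obtain ⟨k', hk', heq⟩ := (hPM _).1 hmem
    obtain ⟨c, hc⟩ := hrotconj k (le_of_lt hk)
    obtain ⟨d, hd⟩ := hrotconj k' (le_of_lt hk')
    have h1 : (prodList (w.rotate k))⁻¹ = prodList (w.rotate k') := by
      rw [← heq, prodList_invRev]
    rw [hc, hd] at h1
    apply hconj
    refine ⟨z * (c * d⁻¹) * z⁻¹, ?_⟩
    have key : c⁻¹ * y⁻¹ * c = d⁻¹ * y * d := by
      rw [← h1]; group
    have key2 : y⁻¹ = (c * d⁻¹) * y * (c * d⁻¹)⁻¹ := by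
      calc y⁻¹ = c * (c⁻¹ * y⁻¹ * c) * c⁻¹ := by group
      _ = c * (d⁻¹ * y * d) * c⁻¹ := by rw [key]
      _ = (c * d⁻¹) * y * (c * d⁻¹)⁻¹ := by group
    rw [hxz]
    calc z * (c * d⁻¹) * z⁻¹ * (z * y * z⁻¹) * (z * (c * d⁻¹) * z⁻¹)⁻¹
        = z * ((c * d⁻¹) * y * (c * d⁻¹)⁻¹) * z⁻¹ := by group
    _ = z * y⁻¹ * z⁻¹ := by rw [← key2]
    _ = (z * y * z⁻¹)⁻¹ := by group
  have hval : ∀ n : ℕ, 1 ≤ n → (n : ℝ) * L - (L - 1) ≤ φ (y ^ n) := by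
    intro n hn
    have hNF : NF (y ^ n) = wpow w n := NF_pow_eq_wpow hred hlen2 hcyc n
    have hge := cnt_wpow_ge (S := Sp) w hL1 (fun k hk => ⟨k, hk, rfl⟩) hn hLdef
    have hzero := cnt_wpow_eq_zero (S := Sm) (n := n) w hL1 hSm (fun k hk => hdisj k hk) hLdef
    have hphi : φ (y ^ n) = (cnt L Sp (wpow w n) : ℝ) - cnt L Sm (wpow w n) := by
      rw [hφdef]
      dsimp only
      rw [hNF]
    rw [hphi, hzero]
    have hger := (Nat.cast_le (α := ℝ)).2 hge
    push_cast at hger ⊢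
    rw [← hLdef] at hger
    linarith
  have hqmy : (L : ℝ) ≤ qmH φ D y := by
    have hT : Tendsto (fun n : ℕ => (L : ℝ) - (L - 1) / n) atTop (𝓝 ((L : ℝ) - 0)) :=
      tendsto_const_nhds.sub (tendsto_const_div_atTop_nhds_zero_nat _)
    rw [sub_zero] at hT
    refine le_of_tendsto_of_tendsto hT (tendsto_qmH hdef y) ?_
    filter_upwards [eventually_ge_atTop 1] with n hn
    have hn0 : (0 : ℝ) < n := by exact_mod_cast hn
    have hv := hval n hn
    show (L : ℝ) - (L - 1) / n ≤ φ (y ^ n) / n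
    rw [sub_div' (ne_of_gt hn0)]
    rw [div_le_div_iff₀ hn0 hn0]
    nlinarith
  have hqmg : (L : ℝ) ≤ qmH φ D g := by
    have hcj := qmH_conj hdef z y
    rw [← hxz] at hcj
    rw [hcj]
    exact hqmy
  have hL2r : (2 : ℝ) ≤ (L : ℝ) := by exact_mod_cast hlen2
  refine le_iInf fun n => le_iInf fun hex => ?_
  set k := commutatorLength (g ^ (n : ℕ)) with hkdef
  have hkmem : IsProdOfCommutators (g ^ (n : ℕ)) k := Nat.sInf_mem hex
  obtain ⟨aa, bb, hab⟩ := hkmem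
  clear_value k
  have h1 : qmH φ D (g ^ (n : ℕ)) ≤ (2 * k) * (2 * D) := by
    rw [hab]
    have hlist := qmH_list_prod_le hdef (List.ofFn fun i => ⁅aa i, bb i⁆) ?_
    · rwa [List.length_ofFn] at hlist
    · intro c hc
      rw [List.mem_ofFn] at hc
      obtain ⟨i, hi⟩ := hc
      rw [← hi]
      exact qmH_commutator_le hdef _ _
  have h2 : qmH φ D (g ^ (n : ℕ)) = (n : ℕ) * qmH φ D g :=
    qmH_pow hdef g n.2
  have hnk : (n : ℕ) ≤ 12 * k := by
    have hnr : ((n : ℕ) : ℝ) * L ≤ (2 * k) * (2 * D) := by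
      have hn0 : (0 : ℝ) ≤ ((n : ℕ) : ℝ) := by positivity
      nlinarith [h1, h2, hqmg]
    have hfin : ((n : ℕ) : ℝ) ≤ 12 * k := by
      rw [hDdef] at hnr
      nlinarith [hnr, hL2r, (by positivity : (0:ℝ) ≤ ((k : ℕ) : ℝ))]
    exact_mod_cast hfin
  show (1 / 12 : ℝ≥0∞) ≤ (k : ℝ≥0∞) / ((n : ℕ) : ℝ≥0∞)
  have hk1 : 1 ≤ k := by
    have h := n.2
    rcases Nat.eq_zero_or_pos k with h0 | h0
    · rw [h0, Nat.mul_zero] at hnk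
      exact absurd (Nat.le_zero.mp hnk) (Nat.pos_iff_ne_zero.mp h)
    · exact h0
  have hknz : (k : ℝ≥0∞) ≠ 0 := by
    simp only [ne_eq, Nat.cast_eq_zero]
    omega
  have hktop : (k : ℝ≥0∞) ≠ ⊤ := ENNReal.natCast_ne_top k
  have hcalc : (1 / 12 : ℝ≥0∞) = (k : ℝ≥0∞) * 1 / ((k : ℝ≥0∞) * 12) :=
    (ENNReal.mul_div_mul_left 1 12 hknz hktop).symm
  rw [hcalc, mul_one]
  refine ENNReal.div_le_div (le_refl _) ?_
  have hcast : ((n : ℕ) : ℝ≥0∞) ≤ ((12 * k : ℕ) : ℝ≥0∞) := by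
    exact_mod_cast hnk
  rw [Nat.cast_mul] at hcast
  calc ((n : ℕ) : ℝ≥0∞) ≤ ((12 : ℕ) : ℝ≥0∞) * (k : ℝ≥0∞) := hcast
  _ = (k : ℝ≥0∞) * 12 := by
    rw [mul_comm]
    norm_num
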